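/- Let A be a C*-algebra, let a ∈ A be positive, and let s₁, s₂ ∈ A and a positive element b ∈ A satisfy s₁ a s₁* = b, s₂ a s₂* = b, and s₁ a s₂* = 0. Define r = a^{1/2} s₁* s₂ a^{1/2}. Then r² = 0 and b³ = (s₁ a^{1/2}) (r r*) (s₁ a^{1/2})*. -/
import Mathlib


/-- From a "2-fold copy" of `b` inside `a` one constructs a square-zero element
`r = a^{1/2} s₁* s₂ a^{1/2}` with `b³ = (s₁ a^{1/2}) (r r*) (s₁ a^{1/2})*`. -/
theorem stmt9 {A : Type*} [CStarAlgebra A] [PartialOrder A] [StarOrderedRing A] (a b s₁ s₂ : A)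
    (ha : 0 ≤ a) (hb : 0 ≤ b)
    (h1 : s₁ * a * star s₁ = b) (h2 : s₂ * a * star s₂ = b)
    (h12 : s₁ * a * star s₂ = 0) :
    (CFC.sqrt a * (star s₁ * s₂) * CFC.sqrt a) *
        (CFC.sqrt a * (star s₁ * s₂) * CFC.sqrt a) = 0 ∧
      b ^ 3 =
        (s₁ * CFC.sqrt a) *
          ((CFC.sqrt a * (star s₁ * s₂) * CFC.sqrt a) *
            star (CFC.sqrt a * (star s₁ * s₂) * CFC.sqrt a)) *
          star (s₁ * CFC.sqrt a) := by
  have hsq : CFC.sqrt a * CFC.sqrt a = a := CFC.sqrt_mul_sqrt_self a ha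
  have hsa : star (CFC.sqrt a) = CFC.sqrt a :=
    (IsSelfAdjoint.of_nonneg (CFC.sqrt_nonneg (a := a))).star_eq
  have h21 : s₂ * a * star s₁ = 0 := by
    have := congrArg star h12
    simpa [star_mul, mul_assoc, (IsSelfAdjoint.of_nonneg ha).star_eq] using this
  set t := CFC.sqrt a with ht
  rw [← hsq] at h1 h2 h21
  simp only [star_mul, hsa, star_star]
  constructor
  · have : t * (star s₁ * s₂) * t * (t * (star s₁ * s₂) * t)
        = t * star s₁ * (s₂ * (t * t) * star s₁) * s₂ * t := by noncomm_ring
    rw [this, h21]; noncomm_ring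
  · calc b ^ 3 = (s₁ * (t * t) * star s₁) * (s₂ * (t * t) * star s₂) *
          (s₁ * (t * t) * star s₁) := by rw [h1, h2]; noncomm_ring
      _ = s₁ * t * (t * (star s₁ * s₂) * t * (t * (star s₂ * s₁ * t))) * (t * star s₁) := by
          noncomm_ring
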